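/- In the setting of Theorem 3.6(a), if T is bounded then t_π is bounded with ‖t_π‖ ≤ k(π)‖T‖, where k(π) = inf{k(π,V) : V a one-dimensional subspace of π**(p₂)H}. -/
import Mathlib


open scoped ComplexOrder

universe u

noncomputable section

variable {A : Type*} [NonUnitalNormedRing A] [StarRing A] [CStarRing A]
  [NormedSpace ℂ A] [IsScalarTower ℂ A A] [SMulCommClass ℂ A A] [StarModule ℂ A]
variable {Hu : Type*} [NormedAddCommGroup Hu] [InnerProductSpace ℂ Hu] [CompleteSpace Hu]
variable {H : Type*} [NormedAddCommGroup H] [InnerProductSpace ℂ H] [CompleteSpace H]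

/- Setup modelling the enveloping von Neumann algebra `A**`:  `ι : A → B(Hu)` is the
universal representation of `A` and `M = ι(A)'' ≅ A**` is the enveloping von Neumann
algebra.  Normal states on `B(Hu)` are given by sequences of vectors; every state of `A`
has a unique normal extension to `A**`, namely its unique normal extension along `ι`. -/

/-- `p` is an (orthogonal) projection. -/
def IsProjection (p : Hu →L[ℂ] Hu) : Prop := IsSelfAdjoint p ∧ p * p = p

/-- A normal state, given by a sequence of vectors with `∑ ‖vₙ‖² = 1`,
via `Φ(x) = ∑ ⟨x vₙ, vₙ⟩`. -/
structure NormalState (Hu : Type*) [NormedAddCommGroup Hu] [InnerProductSpace ℂ Hu] where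
  vec : ℕ → Hu
  sum_sq : ∑' n, (‖vec n‖ : ℝ) ^ 2 = 1

noncomputable def NormalState.app (Φ : NormalState Hu) (x : Hu →L[ℂ] Hu) : ℂ :=
  ∑' n, @inner ℂ Hu _ (x (Φ.vec n)) (Φ.vec n)

/-- An irreducible representation `π` of `A` on `H` together with its normal extension
`Pi = π**` to the enveloping von Neumann algebra `M = A** ⊆ B(Hu)`. -/
structure IrredRepExt (A : Type*) [NonUnitalNormedRing A] [StarRing A] [CStarRing A]
    [NormedSpace ℂ A] [IsScalarTower ℂ A A] [SMulCommClass ℂ A A] [StarModule ℂ A]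
    (Hu : Type*) [NormedAddCommGroup Hu] [InnerProductSpace ℂ Hu] [CompleteSpace Hu]
    (H : Type*) [NormedAddCommGroup H] [InnerProductSpace ℂ H] [CompleteSpace H]
    (ι : A →⋆ₙₐ[ℂ] (Hu →L[ℂ] Hu)) (M : VonNeumannAlgebra Hu) where
  π : A →⋆ₙₐ[ℂ] (H →L[ℂ] H)
  irreducible : π ≠ 0 ∧ ∀ K : Submodule ℂ H, IsClosed (K : Set H) →
    (∀ a : A, ∀ v ∈ K, π a v ∈ K) → K = ⊥ ∨ K = ⊤
  Pi : (Hu →L[ℂ] Hu) → (H →L[ℂ] H)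
  Pi_extends : ∀ a : A, Pi (ι a) = π a
  Pi_add : ∀ m n : Hu →L[ℂ] Hu, m ∈ M → n ∈ M → Pi (m + n) = Pi m + Pi n
  Pi_smul : ∀ (c : ℂ) (m : Hu →L[ℂ] Hu), m ∈ M → Pi (c • m) = c • Pi m
  Pi_mul : ∀ m n : Hu →L[ℂ] Hu, m ∈ M → n ∈ M → Pi (m * n) = Pi m * Pi n
  Pi_star : ∀ m : Hu →L[ℂ] Hu, m ∈ M → Pi (star m) = star (Pi m)
  /-- `Pi` is normal: every vector state of `H` pulls back to a normal state of `M`. -/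
  Pi_normal : ∀ w : H, ∃ Φ : NormalState Hu, ∀ m : Hu →L[ℂ] Hu, m ∈ M →
    (@inner ℂ H _ (Pi m w) w) = (‖w‖ : ℂ) ^ 2 * Φ.app m

/-- `X ⊆ A**` satisfies condition `K(p₁,p₂)`: for every irreducible `π` with
`π**(p₁), π**(p₂) ≠ 0` and every nonzero finite-dimensional subspace `V ⊆ π**(p₂)H`,
there is `k(π,V) > 0` such that every `t ∈ π**(p₁)B(H)` is interpolated on `V`
by some `x ∈ X` with `‖x‖ ≤ k(π,V)‖t‖`. -/
def SatisfiesK (ι : A →⋆ₙₐ[ℂ] (Hu →L[ℂ] Hu)) (M : VonNeumannAlgebra Hu)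
    (p₁ p₂ : Hu →L[ℂ] Hu) (X : Submodule ℂ (Hu →L[ℂ] Hu)) : Prop :=
  ∀ (K : Type u) [NormedAddCommGroup K] [InnerProductSpace ℂ K] [CompleteSpace K]
    (ρ : IrredRepExt A Hu K ι M), ρ.Pi p₁ ≠ 0 → ρ.Pi p₂ ≠ 0 →
    ∀ V : Submodule ℂ K, V ≠ ⊥ → FiniteDimensional ℂ V → (∀ v ∈ V, ρ.Pi p₂ v = v) →
      ∃ k : ℝ, 0 < k ∧ ∀ t : K →L[ℂ] K, ρ.Pi p₁ * t = t →
        ∃ x ∈ X, ‖x‖ ≤ k * ‖t‖ ∧ ∀ v ∈ V, ρ.Pi x v = t v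

/-- A state of `A`: a positive linear functional of norm one. -/
def IsState (φ : A →L[ℂ] ℂ) : Prop := (∀ a : A, 0 ≤ φ (star a * a)) ∧ ‖φ‖ = 1

/-- A pure state of `A`: an extreme point of the state space. -/
def IsPureState (φ : A →L[ℂ] ℂ) : Prop :=
  IsState φ ∧ ∀ ψ₁ ψ₂ : A →L[ℂ] ℂ, IsState ψ₁ → IsState ψ₂ →
    φ = (2⁻¹ : ℂ) • ψ₁ + (2⁻¹ : ℂ) • ψ₂ → ψ₁ = ψ₂

/-- `T : X → A**` is purely decomposable: for every pure state `φ` of `A` (extended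
normally to `A**`) and every `x ∈ X`, `φ(x*x) = 0` implies `φ((Tx)*(Tx)) = 0`. -/
def PurelyDecomposable (ι : A →⋆ₙₐ[ℂ] (Hu →L[ℂ] Hu))
    (X : Submodule ℂ (Hu →L[ℂ] Hu)) (T : X →ₗ[ℂ] (Hu →L[ℂ] Hu)) : Prop :=
  ∀ φ : A →L[ℂ] ℂ, IsPureState φ →
    ∀ Φ : NormalState Hu, (∀ a : A, Φ.app (ι a) = φ a) →
      ∀ x : X, Φ.app (star (x : Hu →L[ℂ] Hu) * (x : Hu →L[ℂ] Hu)) = 0 →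
        Φ.app (star (T x) * T x) = 0


/-- Auxiliary: the normal extension `Pi` is contractive on `M`, via normality. -/
theorem aux_Pi_norm_apply_le (ι : A →⋆ₙₐ[ℂ] (Hu →L[ℂ] Hu)) (M : VonNeumannAlgebra Hu)
    (ρ : IrredRepExt A Hu H ι M) (m : Hu →L[ℂ] Hu) (hm : m ∈ M) (v : H) :
    ‖ρ.Pi m v‖ ≤ ‖m‖ * ‖v‖ := by
  obtain ⟨Φ, hΦ⟩ := ρ.Pi_normal v
  have hmm : star m * m ∈ M := mul_mem (star_mem hm) hm
  have h1 := hΦ (star m * m) hmm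
  have h2 : ρ.Pi (star m * m) = star (ρ.Pi m) * ρ.Pi m := by
    rw [ρ.Pi_mul _ _ (star_mem hm) hm, ρ.Pi_star m hm]
  rw [h2] at h1
  have h3 : (@inner ℂ H _ ((star (ρ.Pi m) * ρ.Pi m) v) v) = ((‖ρ.Pi m v‖ ^ 2 : ℝ) : ℂ) := by
    rw [ContinuousLinearMap.mul_apply, ContinuousLinearMap.star_eq_adjoint,
      ContinuousLinearMap.adjoint_inner_left, inner_self_eq_norm_sq_to_K]
    norm_cast
  have happ : Φ.app (star m * m) = ((∑' n, ‖m (Φ.vec n)‖ ^ 2 : ℝ) : ℂ) := by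
    have hterm : ∀ n, @inner ℂ Hu _ ((star m * m) (Φ.vec n)) (Φ.vec n)
        = ((‖m (Φ.vec n)‖ ^ 2 : ℝ) : ℂ) := by
      intro n
      rw [ContinuousLinearMap.mul_apply, ContinuousLinearMap.star_eq_adjoint,
        ContinuousLinearMap.adjoint_inner_left, inner_self_eq_norm_sq_to_K]
      norm_cast
    rw [NormalState.app]
    simp_rw [hterm]
    rw [Complex.ofReal_tsum]
  have hsum : Summable (fun n => ‖Φ.vec n‖ ^ 2 : ℕ → ℝ) := by
    by_contra h
    have := tsum_eq_zero_of_not_summable h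
    rw [Φ.sum_sq] at this; norm_num at this
  have hle : ∀ n, ‖m (Φ.vec n)‖ ^ 2 ≤ ‖m‖ ^ 2 * ‖Φ.vec n‖ ^ 2 := by
    intro n
    have := m.le_opNorm (Φ.vec n)
    nlinarith [norm_nonneg (m (Φ.vec n)), norm_nonneg m, norm_nonneg (Φ.vec n)]
  have hbound : (∑' n, ‖m (Φ.vec n)‖ ^ 2 : ℝ) ≤ ‖m‖ ^ 2 := by
    calc (∑' n, ‖m (Φ.vec n)‖ ^ 2 : ℝ) ≤ ∑' n, ‖m‖ ^ 2 * ‖Φ.vec n‖ ^ 2 := by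
          apply Summable.tsum_le_tsum hle _ (hsum.mul_left _)
          exact Summable.of_nonneg_of_le (fun n => by positivity) hle (hsum.mul_left _)
      _ = ‖m‖ ^ 2 := by rw [tsum_mul_left, Φ.sum_sq, mul_one]
  rw [h3, happ] at h1
  have hr : (‖ρ.Pi m v‖ ^ 2 : ℝ) = ‖v‖ ^ 2 * ∑' n, ‖m (Φ.vec n)‖ ^ 2 := by
    exact_mod_cast h1
  nlinarith [norm_nonneg (ρ.Pi m v), norm_nonneg m, norm_nonneg v,
    sq_nonneg (‖ρ.Pi m v‖ + ‖m‖ * ‖v‖), sq_nonneg (‖v‖), mul_nonneg (norm_nonneg m) (norm_nonneg v)]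

/-- Theorem 3.6(b): in the setting of Theorem 3.6(a), if `T` is bounded
(with bound `C`) then `t_π` is bounded with `‖t_π‖ ≤ k(π)‖T‖`: for every one-dimensional
subspace `V ⊆ π**(p₂)H` and valid interpolation constant `k = k(π,V)`,
`‖t_π w‖ ≤ k C ‖w‖`. -/
theorem stmt_15 (ι : A →⋆ₙₐ[ℂ] (Hu →L[ℂ] Hu)) (M : VonNeumannAlgebra Hu)
    (hιM : ∀ a : A, ι a ∈ M) (hιiso : ∀ a : A, ‖ι a‖ = ‖a‖)
    (p₁ p₂ : Hu →L[ℂ] Hu) (hp₁ : IsProjection p₁) (hp₂ : IsProjection p₂)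
    (hp₁M : p₁ ∈ M) (hp₂M : p₂ ∈ M)
    (X : Submodule ℂ (Hu →L[ℂ] Hu)) (hXM : ∀ x ∈ X, x ∈ M)
    (hX12 : ∀ x ∈ X, p₁ * x * p₂ = x)
    (hK : SatisfiesK ι M p₁ p₂ X)
    (T : X →ₗ[ℂ] (Hu →L[ℂ] Hu)) (hTM : ∀ x : X, T x ∈ M)
    (hT : PurelyDecomposable ι X T)
    (ρ : IrredRepExt A Hu H ι M) (h1 : ρ.Pi p₁ ≠ 0) (h2 : ρ.Pi p₂ ≠ 0)
    -- `t_π` as provided by Theorem 3.6(a):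
    (t : LinearMap.range ((ρ.Pi p₁ : H →L[ℂ] H) : H →ₗ[ℂ] H) →ₗ[ℂ] H)
    (ht : ∀ (x : X) (v : H)
      (hv : ρ.Pi (x : Hu →L[ℂ] Hu) v ∈ LinearMap.range ((ρ.Pi p₁ : H →L[ℂ] H) : H →ₗ[ℂ] H)),
      ρ.Pi (T x) v = t ⟨ρ.Pi (x : Hu →L[ℂ] Hu) v, hv⟩)
    -- `T` is bounded, with bound `C = ‖T‖`:
    (C : ℝ) (hC0 : 0 ≤ C) (hC : ∀ x : X, ‖T x‖ ≤ C * ‖x‖)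
    -- a one-dimensional subspace `V ⊆ π**(p₂)H` with a valid constant `k = k(π,V)`:
    (V : Submodule ℂ H) (hVdim : Module.finrank ℂ V = 1) (hV₂ : ∀ v ∈ V, ρ.Pi p₂ v = v)
    (k : ℝ) (hk : 0 < k)
    (hkV : ∀ s : H →L[ℂ] H, ρ.Pi p₁ * s = s →
      ∃ x ∈ X, ‖x‖ ≤ k * ‖s‖ ∧ ∀ v ∈ V, ρ.Pi x v = s v) :
    ∀ w : LinearMap.range ((ρ.Pi p₁ : H →L[ℂ] H) : H →ₗ[ℂ] H), ‖t w‖ ≤ k * C * ‖w‖ := by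
  intro w
  have hPi1 : ρ.Pi p₁ * ρ.Pi p₁ = ρ.Pi p₁ := by
    rw [← ρ.Pi_mul p₁ p₁ hp₁M hp₁M, hp₁.2]
  obtain ⟨u, hu⟩ := w.2
  have hw1 : ρ.Pi p₁ (w : H) = (w : H) := by
    rw [← hu]
    have := congrArg (fun f => f u) hPi1
    simpa using this
  have hVne : V ≠ ⊥ := by
    intro h; rw [h] at hVdim; simp at hVdim
  obtain ⟨v, hvV, hv0⟩ := (Submodule.ne_bot_iff V).mp hVne
  set v₀ : H := (‖v‖⁻¹ : ℂ) • v with hv₀def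
  have hv₀V : v₀ ∈ V := V.smul_mem _ hvV
  have hv₀norm : ‖v₀‖ = 1 := by
    simp [hv₀def, norm_smul, inv_mul_cancel₀ (norm_ne_zero_iff.mpr hv0)]
  set s : H →L[ℂ] H := (innerSL ℂ v₀).smulRight (w : H) with hsdef
  have hs1 : ρ.Pi p₁ * s = s := by
    ext u'
    simp only [ContinuousLinearMap.mul_apply, hsdef, ContinuousLinearMap.smulRight_apply,
      innerSL_apply_apply, map_smul, hw1]
  have hsnorm : ‖s‖ = ‖(w : H)‖ := by
    rw [hsdef, ContinuousLinearMap.norm_smulRight_apply, innerSL_apply_norm, hv₀norm, one_mul]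
  obtain ⟨x, hxX, hxnorm, hxv⟩ := hkV s hs1
  have hsv₀ : s v₀ = (w : H) := by
    rw [hsdef]
    simp only [ContinuousLinearMap.smulRight_apply, innerSL_apply_apply, inner_self_eq_norm_sq_to_K,
      hv₀norm]
    norm_num
  set x' : X := ⟨x, hxX⟩ with hx'def
  have hsx : ρ.Pi (x' : Hu →L[ℂ] Hu) v₀ = (w : H) := by
    rw [hx'def]
    simpa [hsv₀] using hxv v₀ hv₀V
  have hvmem : ρ.Pi (x' : Hu →L[ℂ] Hu) v₀
      ∈ LinearMap.range ((ρ.Pi p₁ : H →L[ℂ] H) : H →ₗ[ℂ] H) := by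
    rw [hsx]; exact w.2
  have htw : ρ.Pi (T x') v₀ = t w := by
    rw [ht x' v₀ hvmem]
    congr 1
    exact Subtype.ext hsx
  calc ‖t w‖ = ‖ρ.Pi (T x') v₀‖ := by rw [htw]
    _ ≤ ‖T x'‖ * ‖v₀‖ := aux_Pi_norm_apply_le ι M ρ (T x') (hTM x') v₀
    _ = ‖T x'‖ := by rw [hv₀norm, mul_one]
    _ ≤ C * ‖x'‖ := hC x'
    _ ≤ C * (k * ‖s‖) := by
        exact mul_le_mul_of_nonneg_left hxnorm hC0
    _ = k * C * ‖w‖ := by rw [hsnorm, Submodule.coe_norm]; ring
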